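/- arXiv:2304.03989 — 2 statements merged into one kernel-verified Lean document; each statement's English description precedes it below -/
import Mathlib

section
/- Let A be a holomorphic Fredholm pencil with z₀ isolated in σ(A), A₀ = A(z₀), A₁ = A'(z₀). If A(z)⁻¹ has a simple pole at z₀, then for any closed complement V₀ of ran A₀ the operator S_{V₀} = P_{V₀} A₁|_{ker A₀} : ker A₀ → V₀ is invertible. -/
open scoped Topology

set_option maxHeartbeats 1000000

open Filter in
lemma tendsto_coeff_zero {F : Type*} [NormedAddCommGroup F] [NormedSpace ℂ F]
    (c : ℕ → F) (g : ℂ → F) (z₀ : ℂ)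
    (h : ∀ᶠ z in 𝓝[≠] z₀, HasSum (fun n : ℕ => (z - z₀) ^ n • c n) (g z)) :
    Tendsto g (𝓝[≠] z₀) (𝓝 (c 0)) := by
  -- pick a point z₁ ≠ z₀ where the sum converges
  obtain ⟨z₁, hz₁sum, hz₁ne⟩ := (h.and (eventually_mem_nhdsWithin)).exists
  set r : ℝ := ‖z₁ - z₀‖ with hr_def
  have hr : 0 < r := by
    simpa [hr_def, sub_eq_zero] using hz₁ne
  -- bound the coefficients
  have hb : Tendsto (fun n => ‖(z₁ - z₀) ^ n • c n‖) atTop (𝓝 0) := by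
    simpa using hz₁sum.summable.tendsto_atTop_zero.norm
  obtain ⟨C, hC⟩ := hb.bddAbove_range
  have hCb : ∀ n, ‖c n‖ * r ^ n ≤ C := by
    intro n
    have := hC ⟨n, rfl⟩
    simpa [norm_smul, norm_pow, mul_comm, hr_def] using this
  have hC0 : 0 ≤ C := le_trans (by positivity) (hCb 0)
  rw [tendsto_iff_norm_sub_tendsto_zero]
  have key : ∀ᶠ z in 𝓝[≠] z₀, ‖g z - c 0‖ ≤ (2 * C / r) * ‖z - z₀‖ := by
    filter_upwards [h, eventually_mem_nhdsWithin,
      eventually_nhdsWithin_of_eventually_nhds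
        (Metric.eventually_nhds_iff.mpr ⟨r / 2, by positivity, fun {z} hz => hz⟩)]
      with z hsum hzne hzlt
    have hzlt' : ‖z - z₀‖ < r / 2 := by simpa [dist_eq_norm] using hzlt
    have hznn : (0:ℝ) ≤ ‖z - z₀‖ := norm_nonneg _
    have hshift : HasSum (fun n : ℕ => (z - z₀) ^ (n + 1) • c (n + 1)) (g z - c 0) := by
      have := (hasSum_nat_add_iff' (f := fun n : ℕ => (z - z₀) ^ n • c n) 1).mpr hsum
      simpa using this
    -- geometric bound on each term
    have hterm : ∀ n : ℕ, ‖(z - z₀) ^ (n + 1) • c (n + 1)‖ ≤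
        (2 * C / r) * ‖z - z₀‖ * (1 / 2) ^ (n + 1) := by
      intro n
      have h1 : ‖(z - z₀) ^ (n + 1) • c (n + 1)‖ = ‖z - z₀‖ ^ (n + 1) * ‖c (n + 1)‖ := by
        rw [norm_smul, norm_pow]
      have h2 : ‖c (n + 1)‖ ≤ C / r ^ (n + 1) := by
        rw [le_div_iff₀ (by positivity)]
        exact hCb (n + 1)
      calc ‖(z - z₀) ^ (n + 1) • c (n + 1)‖
          ≤ ‖z - z₀‖ ^ (n + 1) * (C / r ^ (n + 1)) := by
            rw [h1]; exact mul_le_mul_of_nonneg_left h2 (by positivity)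
        _ ≤ ‖z - z₀‖ * (r / 2) ^ n * (C / r ^ (n + 1)) := by
            apply mul_le_mul_of_nonneg_right _ (by positivity)
            rw [pow_succ, mul_comm]
            exact mul_le_mul_of_nonneg_left (pow_le_pow_left₀ hznn hzlt'.le n) hznn
        _ = (2 * C / r) * ‖z - z₀‖ * (1 / 2) ^ (n + 1) := by
            field_simp
            ring
    have hsummable : Summable (fun n : ℕ => (2 * C / r) * ‖z - z₀‖ * (1 / 2 : ℝ) ^ (n + 1)) := by
      apply Summable.mul_left
      exact (summable_geometric_of_lt_one (by norm_num) (by norm_num)).comp_injective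
        (add_left_injective 1) |>.congr (fun n => rfl)
    calc ‖g z - c 0‖ ≤ ∑' n : ℕ, (2 * C / r) * ‖z - z₀‖ * (1 / 2 : ℝ) ^ (n + 1) :=
          hshift.norm_le_of_bounded hsummable.hasSum hterm
      _ ≤ (2 * C / r) * ‖z - z₀‖ * 1 := by
          rw [tsum_mul_left]
          apply mul_le_mul_of_nonneg_left _ (by positivity)
          have h12 : ∑' n : ℕ, (1 / 2 : ℝ) ^ (n + 1) = 1 := by
            simp_rw [pow_succ]
            rw [tsum_mul_right, tsum_geometric_of_lt_one (by norm_num) (by norm_num)]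
            norm_num
          rw [h12]
      _ ≤ (2 * C / r) * ‖z - z₀‖ := by rw [mul_one]
  have hlim : Tendsto (fun z : ℂ => (2 * C / r) * ‖z - z₀‖) (𝓝[≠] z₀) (𝓝 0) := by
    have h0 : Tendsto (fun z : ℂ => (2 * C / r) * ‖z - z₀‖) (𝓝 z₀)
        (𝓝 ((2 * C / r) * ‖z₀ - z₀‖)) :=
      (continuous_const.mul ((continuous_id.sub continuous_const).norm)).tendsto z₀
    simpa using h0.mono_left nhdsWithin_le_nhds
  exact squeeze_zero' (Eventually.of_forall fun z => norm_nonneg _) key hlim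


/-- A bounded operator is Fredholm if its kernel and cokernel are finite dimensional. -/
def IsFredholmOp {E : Type*} [NormedAddCommGroup E] [NormedSpace ℂ E]
    (A : E →L[ℂ] E) : Prop :=
  FiniteDimensional ℂ (LinearMap.ker (A : E →ₗ[ℂ] E)) ∧ FiniteDimensional ℂ (E ⧸ LinearMap.range (A : E →ₗ[ℂ] E))

/-- if the inverse of the holomorphic Fredholm pencil `A` has a simple pole at
the isolated spectral point `z₀`, then for any closed complement `V₀` of `ran A₀` (with
projection `P` onto `V₀` along `ran A₀`) the map `S_{V₀} = P A₁|_{ker A₀} : ker A₀ → V₀`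
is invertible (injective and onto `V₀`). -/
theorem stmt_9 {E : Type*} [NormedAddCommGroup E] [NormedSpace ℂ E] [CompleteSpace E]
    (U : Set ℂ) (hUopen : IsOpen U) (hUconn : IsConnected U)
    (A : ℂ → E →L[ℂ] E) (hol : AnalyticOnNhd ℂ A U)
    (hFred : ∀ z ∈ U, IsFredholmOp (A z))
    (z₀ : ℂ) (hz₀ : z₀ ∈ U)
    (hsing : ¬ IsUnit (A z₀)) (hiso : ∀ᶠ z in 𝓝[≠] z₀, IsUnit (A z))
    -- Laurent expansion of the inverse `N(z)` with a simple pole at `z₀`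
    (N : ℤ → E →L[ℂ] E) (hNm : N (-1) ≠ 0) (hlow : ∀ j : ℤ, j < -1 → N j = 0)
    (Ninv : ℂ → E →L[ℂ] E)
    (hNinv : ∀ᶠ z in 𝓝[≠] z₀, Ninv z ∘L A z = 1 ∧ A z ∘L Ninv z = 1)
    (hLaurent : ∀ᶠ z in 𝓝[≠] z₀, HasSum (fun j : ℤ => (z - z₀) ^ j • N j) (Ninv z))
    -- a closed complement `V₀` of `ran A₀` and the projection `P` onto `V₀` along `ran A₀`
    (V₀ : Submodule ℂ E) (hV₀closed : IsClosed (V₀ : Set E))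
    (hV₀ : IsCompl (LinearMap.range (A z₀ : E →ₗ[ℂ] E)) V₀)
    (P : E →L[ℂ] E) (hPidem : P ∘L P = P)
    (hPker : LinearMap.ker (P : E →ₗ[ℂ] E) = LinearMap.range (A z₀ : E →ₗ[ℂ] E)) (hPran : LinearMap.range (P : E →ₗ[ℂ] E) = V₀) :
    Function.Injective (fun x : LinearMap.ker (A z₀ : E →ₗ[ℂ] E) => P (deriv A z₀ x)) ∧
      ∀ v ∈ V₀, ∃ x ∈ LinearMap.ker (A z₀ : E →ₗ[ℂ] E), P (deriv A z₀ x) = v := by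
  have hne : ∀ᶠ z in 𝓝[≠] z₀, z ≠ z₀ := eventually_mem_nhdsWithin
  -- Reindexed Laurent series for (z - z₀) • Ninv z
  have hA : ∀ᶠ z in 𝓝[≠] z₀, HasSum (fun n : ℕ => (z - z₀) ^ n • N ((n : ℤ) - 1))
      ((z - z₀) • Ninv z) := by
    filter_upwards [hLaurent, hne] with z hz hzne
    have hw : z - z₀ ≠ 0 := sub_ne_zero.mpr hzne
    have h1 : HasSum (fun j : ℤ => (z - z₀) • ((z - z₀) ^ j • N j)) ((z - z₀) • Ninv z) :=
      hz.const_smul (z - z₀)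
    have he : Function.Injective (fun n : ℕ => (n : ℤ) - 1) := by
      intro a b hab
      have : (a : ℤ) - 1 = (b : ℤ) - 1 := hab
      omega
    have hzero : ∀ j : ℤ, j ∉ Set.range (fun n : ℕ => (n : ℤ) - 1) →
        (z - z₀) • ((z - z₀) ^ j • N j) = 0 := by
      intro j hj
      have : j < -1 := by
        by_contra hge
        refine hj ⟨(j + 1).toNat, ?_⟩
        show ((j + 1).toNat : ℤ) - 1 = j
        omega
      simp [hlow j this]
    have h2 := (he.hasSum_iff hzero).mpr h1
    refine h2.congr_fun fun n => ?_
    show (z - z₀) ^ n • N ((n : ℤ) - 1)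
        = (z - z₀) • ((z - z₀) ^ ((n : ℤ) - 1) • N ((n : ℤ) - 1))
    rw [smul_smul]
    congr 1
    rw [show (z - z₀) * (z - z₀) ^ ((n : ℤ) - 1) = (z - z₀) ^ (1 + ((n : ℤ) - 1)) by
        rw [zpow_add₀ hw, zpow_one],
      show (1 : ℤ) + ((n : ℤ) - 1) = (n : ℤ) by ring, zpow_natCast]
  have htF : Filter.Tendsto (fun z => (z - z₀) • Ninv z) (𝓝[≠] z₀) (𝓝 (N (-1))) := by
    have := tendsto_coeff_zero (fun n : ℕ => N ((n : ℤ) - 1)) (fun z => (z - z₀) • Ninv z) z₀ hA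
    simpa using this
  -- series for Ninv z - (z - z₀)⁻¹ • N (-1)
  have hB : ∀ᶠ z in 𝓝[≠] z₀, HasSum (fun n : ℕ => (z - z₀) ^ n • N n)
      (Ninv z - (z - z₀)⁻¹ • N (-1)) := by
    filter_upwards [hA, hne] with z hz hzne
    have hw : z - z₀ ≠ 0 := sub_ne_zero.mpr hzne
    have h1 : HasSum (fun n : ℕ => (z - z₀) ^ (n + 1) • N ((n : ℤ) + 1 - 1))
        ((z - z₀) • Ninv z - N (-1)) := by
      have := (hasSum_nat_add_iff'
        (f := fun n : ℕ => (z - z₀) ^ n • N ((n : ℤ) - 1)) 1).mpr hz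
      simpa using this
    have h2 := h1.const_smul (z - z₀)⁻¹
    have heq : (fun n : ℕ => (z - z₀)⁻¹ • ((z - z₀) ^ (n + 1) • N ((n : ℤ) + 1 - 1)))
        = fun n : ℕ => (z - z₀) ^ n • N n := by
      funext n
      rw [smul_smul, pow_succ]
      rw [show (z - z₀)⁻¹ * ((z - z₀) ^ n * (z - z₀)) = (z - z₀) ^ n * ((z - z₀)⁻¹ * (z - z₀))
        by ring, inv_mul_cancel₀ hw, mul_one]
      norm_num
    rw [heq] at h2
    have hval : (z - z₀)⁻¹ • ((z - z₀) • Ninv z - N (-1))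
        = Ninv z - (z - z₀)⁻¹ • N (-1) := by
      rw [smul_sub, smul_smul, inv_mul_cancel₀ hw, one_smul]
    rwa [hval] at h2
  have htR : Filter.Tendsto (fun z => Ninv z - (z - z₀)⁻¹ • N (-1)) (𝓝[≠] z₀) (𝓝 (N 0)) :=
    tendsto_coeff_zero (fun n : ℕ => N n) _ z₀ hB
  -- continuity and derivative of A at z₀
  have hAz : AnalyticAt ℂ A z₀ := hol z₀ hz₀
  have hA0 : Filter.Tendsto A (𝓝[≠] z₀) (𝓝 (A z₀)) :=
    hAz.continuousAt.continuousWithinAt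
  have hD : Filter.Tendsto (fun z => (z - z₀)⁻¹ • (A z - A z₀)) (𝓝[≠] z₀)
      (𝓝 (deriv A z₀)) := by
    have hd : HasDerivAt A (deriv A z₀) z₀ := hAz.differentiableAt.hasDerivAt
    rw [hasDerivAt_iff_tendsto_slope] at hd
    refine hd.congr fun z => ?_
    rw [slope_def_module]
  -- N (-1) ∘L A z₀ = 0
  have hNA0 : N (-1) ∘L A z₀ = 0 := by
    have h1 : Filter.Tendsto (fun z => ((z - z₀) • Ninv z) * A z) (𝓝[≠] z₀)
        (𝓝 (N (-1) * A z₀)) := htF.mul hA0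
    have h2 : Filter.Tendsto (fun z => ((z - z₀) • Ninv z) * A z) (𝓝[≠] z₀) (𝓝 0) := by
      have heq : ∀ᶠ z in 𝓝[≠] z₀, ((z - z₀) • Ninv z) * A z = (z - z₀) • (1 : E →L[ℂ] E) := by
        filter_upwards [hNinv] with z hz
        rw [ContinuousLinearMap.mul_def, ContinuousLinearMap.smul_comp, hz.1]
      rw [Filter.tendsto_congr' heq]
      have h0 : Filter.Tendsto (fun z : ℂ => (z - z₀) • (1 : E →L[ℂ] E)) (𝓝 z₀)
          (𝓝 ((z₀ - z₀) • (1 : E →L[ℂ] E))) :=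
        ((continuous_id.sub continuous_const).smul continuous_const).tendsto z₀
      simpa using h0.mono_left nhdsWithin_le_nhds
    rw [← ContinuousLinearMap.mul_def]
    exact tendsto_nhds_unique h1 h2
  -- A z₀ ∘L N (-1) = 0
  have hA0N : A z₀ ∘L N (-1) = 0 := by
    have h1 : Filter.Tendsto (fun z => A z * ((z - z₀) • Ninv z)) (𝓝[≠] z₀)
        (𝓝 (A z₀ * N (-1))) := hA0.mul htF
    have h2 : Filter.Tendsto (fun z => A z * ((z - z₀) • Ninv z)) (𝓝[≠] z₀) (𝓝 0) := by
      have heq : ∀ᶠ z in 𝓝[≠] z₀, A z * ((z - z₀) • Ninv z) = (z - z₀) • (1 : E →L[ℂ] E) := by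
        filter_upwards [hNinv] with z hz
        rw [mul_smul_comm, ContinuousLinearMap.mul_def, hz.2]
      rw [Filter.tendsto_congr' heq]
      have h0 : Filter.Tendsto (fun z : ℂ => (z - z₀) • (1 : E →L[ℂ] E)) (𝓝 z₀)
          (𝓝 ((z₀ - z₀) • (1 : E →L[ℂ] E))) :=
        ((continuous_id.sub continuous_const).smul continuous_const).tendsto z₀
      simpa using h0.mono_left nhdsWithin_le_nhds
    rw [← ContinuousLinearMap.mul_def]
    exact tendsto_nhds_unique h1 h2
  -- N (-1) ∘L A₁ + N 0 ∘L A₀ = 1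
  have hid1 : N (-1) ∘L deriv A z₀ + N 0 ∘L A z₀ = 1 := by
    have h1 : Filter.Tendsto
        (fun z => N (-1) * ((z - z₀)⁻¹ • (A z - A z₀)) +
          (Ninv z - (z - z₀)⁻¹ • N (-1)) * A z) (𝓝[≠] z₀)
        (𝓝 (N (-1) * deriv A z₀ + N 0 * A z₀)) :=
      (Filter.Tendsto.mul tendsto_const_nhds hD).add (htR.mul hA0)
    have heq : ∀ᶠ z in 𝓝[≠] z₀,
        N (-1) * ((z - z₀)⁻¹ • (A z - A z₀)) + (Ninv z - (z - z₀)⁻¹ • N (-1)) * A z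
        = (1 : E →L[ℂ] E) := by
      filter_upwards [hNinv] with z hz
      have e1 : N (-1) * ((z - z₀)⁻¹ • (A z - A z₀))
          = (z - z₀)⁻¹ • (N (-1) * A z) := by
        rw [mul_smul_comm, mul_sub, ContinuousLinearMap.mul_def, ContinuousLinearMap.mul_def,
          hNA0, sub_zero]
      have e2 : (Ninv z - (z - z₀)⁻¹ • N (-1)) * A z
          = 1 - (z - z₀)⁻¹ • (N (-1) * A z) := by
        rw [sub_mul, smul_mul_assoc, ContinuousLinearMap.mul_def, hz.1]
      rw [e1, e2]
      abel
    have h2 := Filter.tendsto_congr' heq |>.mpr (tendsto_const_nhds)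
    have := tendsto_nhds_unique h1 h2
    simpa [ContinuousLinearMap.mul_def] using this
  -- A₁ ∘L N (-1) + A₀ ∘L N 0 = 1
  have hid2 : deriv A z₀ ∘L N (-1) + A z₀ ∘L N 0 = 1 := by
    have h1 : Filter.Tendsto
        (fun z => ((z - z₀)⁻¹ • (A z - A z₀)) * N (-1) +
          A z * (Ninv z - (z - z₀)⁻¹ • N (-1))) (𝓝[≠] z₀)
        (𝓝 (deriv A z₀ * N (-1) + A z₀ * N 0)) :=
      (hD.mul tendsto_const_nhds).add (hA0.mul htR)
    have heq : ∀ᶠ z in 𝓝[≠] z₀,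
        ((z - z₀)⁻¹ • (A z - A z₀)) * N (-1) + A z * (Ninv z - (z - z₀)⁻¹ • N (-1))
        = (1 : E →L[ℂ] E) := by
      filter_upwards [hNinv] with z hz
      have e1 : ((z - z₀)⁻¹ • (A z - A z₀)) * N (-1)
          = (z - z₀)⁻¹ • (A z * N (-1)) := by
        rw [smul_mul_assoc, sub_mul, ContinuousLinearMap.mul_def, ContinuousLinearMap.mul_def,
          hA0N, sub_zero]
      have e2 : A z * (Ninv z - (z - z₀)⁻¹ • N (-1))
          = 1 - (z - z₀)⁻¹ • (A z * N (-1)) := by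
        rw [mul_sub, mul_smul_comm, ContinuousLinearMap.mul_def, hz.2]
      rw [e1, e2]
      abel
    have h2 := Filter.tendsto_congr' heq |>.mpr (tendsto_const_nhds)
    have := tendsto_nhds_unique h1 h2
    simpa [ContinuousLinearMap.mul_def] using this
  -- P kills the range of A z₀, and fixes V₀
  have hPA : ∀ w : E, P (A z₀ w) = 0 := by
    intro w
    have : A z₀ w ∈ LinearMap.ker (P : E →ₗ[ℂ] E) := by
      rw [hPker]; exact ⟨w, rfl⟩
    exact this
  have hPfix : ∀ v ∈ V₀, P v = v := by
    intro v hv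
    rw [← hPran] at hv
    obtain ⟨u, rfl⟩ := hv
    have := congrArg (fun T : E →L[ℂ] E => T u) hPidem
    simpa using this
  constructor
  · -- injectivity
    intro x y hxy
    have hd0 : A z₀ ((x : E) - y) = 0 := by
      rw [map_sub, show A z₀ (x : E) = 0 from x.2, show A z₀ (y : E) = 0 from y.2, sub_zero]
    have hPd : P (deriv A z₀ ((x : E) - y)) = 0 := by
      rw [map_sub, map_sub]
      simpa [sub_eq_zero] using hxy
    have hmem : deriv A z₀ ((x : E) - y) ∈ LinearMap.ker (P : E →ₗ[ℂ] E) := hPd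
    rw [hPker] at hmem
    obtain ⟨w, hw⟩ := hmem
    have hrec : (x : E) - y = N (-1) (deriv A z₀ ((x : E) - y)) := by
      have := congrArg (fun T : E →L[ℂ] E => T ((x : E) - y)) hid1
      simpa [hd0] using this.symm
    have : (x : E) - y = 0 := by
      rw [hrec, ← hw]
      have := congrArg (fun T : E →L[ℂ] E => T w) hNA0
      simpa using this
    exact Subtype.ext (sub_eq_zero.mp this)
  · -- surjectivity onto V₀
    intro v hv
    refine ⟨N (-1) v, ?_, ?_⟩
    · have := congrArg (fun T : E →L[ℂ] E => T v) hA0N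
      simpa [LinearMap.mem_ker] using this
    · have happ := congrArg (fun T : E →L[ℂ] E => T v) hid2
      have h1 : deriv A z₀ (N (-1) v) + A z₀ (N 0 v) = v := by simpa using happ
      have h2 : deriv A z₀ (N (-1) v) = v - A z₀ (N 0 v) := by
        rw [eq_sub_iff_add_eq]; exact h1
      rw [h2, map_sub, hPA, hPfix v hv, sub_zero]
end

section
/- Under a simple pole at z₀ of the inverse of a holomorphic Fredholm pencil, and for any choice V₀ of a complement of ran A₀, the residue is given by N₋₁ = S_{V₀}⁻¹ P_{V₀}, where P_{V₀} is the projection onto V₀ along ran A₀ and S_{V₀} = P_{V₀} A₁|_{ker A₀}. -/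
open scoped Topology

open Filter

private lemma tendsto_clm_comp {E : Type*} [NormedAddCommGroup E] [NormedSpace ℂ E]
    {α : Type*} {l : Filter α} {f g : α → E →L[ℂ] E} {a b : E →L[ℂ] E}
    (hf : Filter.Tendsto f l (𝓝 a)) (hg : Filter.Tendsto g l (𝓝 b)) :
    Filter.Tendsto (fun x => f x ∘L g x) l (𝓝 (a ∘L b)) := by
  have hc : Continuous (fun p : (E →L[ℂ] E) × (E →L[ℂ] E) => p.1.comp p.2) :=
    (isBoundedBilinearMap_comp (𝕜 := ℂ)).continuous
  exact (hc.tendsto (a, b)).comp (hf.prodMk_nhds hg)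

private lemma key_est {E : Type*} [NormedAddCommGroup E] [NormedSpace ℂ E]
    (z₀ : ℂ) (N : ℤ → E →L[ℂ] E) (hlow : ∀ j : ℤ, j < -1 → N j = 0)
    (r C : ℝ) (hr : 0 < r) (hC : ∀ n : ℕ, ‖N (n : ℤ)‖ * r ^ n ≤ C)
    {z : ℂ} (hz : z ≠ z₀) (hz2 : ‖z - z₀‖ ≤ r / 2)
    {S : E →L[ℂ] E} (hS : HasSum (fun j : ℤ => (z - z₀) ^ j • N j) S) :
    ‖(z - z₀) • S - N (-1)‖ ≤ 2 * C * ‖z - z₀‖ := by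
  set w : ℂ := z - z₀ with hwdef
  have hw : w ≠ 0 := sub_ne_zero.mpr hz
  have hC0 : 0 ≤ C := le_trans (by positivity) (hC 0)
  have h2 : HasSum (fun j : ℤ => w • ((w : ℂ) ^ j • N j)) (w • S) := hS.const_smul w
  have hT : Filter.Tendsto
      (fun t : Finset ℤ => ‖(∑ j ∈ t, w • ((w : ℂ) ^ j • N j)) - N (-1)‖)
      Filter.atTop (𝓝 ‖w • S - N (-1)‖) := (h2.sub_const (N (-1))).norm
  refine le_of_tendsto hT ?_
  filter_upwards [Filter.eventually_ge_atTop ({-1} : Finset ℤ)] with t ht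
  have hmem : (-1 : ℤ) ∈ t := ht (Finset.mem_singleton_self _)
  have hterm : w • ((w : ℂ) ^ (-1 : ℤ) • N (-1)) = N (-1) := by
    rw [smul_smul, zpow_neg_one, mul_inv_cancel₀ hw, one_smul]
  have hsplit : (∑ j ∈ t, w • ((w : ℂ) ^ j • N j)) - N (-1)
      = ∑ j ∈ t.erase (-1), w • ((w : ℂ) ^ j • N j) := by
    rw [← Finset.add_sum_erase _ _ hmem, hterm, add_sub_cancel_left]
  rw [hsplit]
  have hnorm : ∀ j : ℤ, ‖w • ((w : ℂ) ^ j • N j)‖ = ‖w‖ * (‖w‖ ^ j * ‖N j‖) := by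
    intro j; rw [norm_smul w ((w : ℂ) ^ j • N j), norm_smul ((w : ℂ) ^ j) (N j), norm_zpow]
  calc ‖∑ j ∈ t.erase (-1), w • ((w : ℂ) ^ j • N j)‖
      ≤ ∑ j ∈ t.erase (-1), ‖w • ((w : ℂ) ^ j • N j)‖ := norm_sum_le _ _
    _ = ∑ j ∈ (t.erase (-1)).filter (fun j => 0 ≤ j),
          ‖w • ((w : ℂ) ^ j • N j)‖ := by
        refine (Finset.sum_filter_of_ne ?_).symm
        intro j hj hne
        by_contra hneg
        push_neg at hneg
        have hj1 : j < -1 := lt_of_le_of_ne (by omega) (Finset.ne_of_mem_erase hj)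
        rw [hlow j hj1] at hne
        simp at hne
    _ ≤ ∑ j ∈ (t.erase (-1)).filter (fun j => 0 ≤ j),
          ‖w‖ * C * (1 / 2 : ℝ) ^ j.toNat := by
        refine Finset.sum_le_sum ?_
        intro j hj
        have hj0 : 0 ≤ j := (Finset.mem_filter.mp hj).2
        set n : ℕ := j.toNat with hn
        have hjn : j = (n : ℤ) := (Int.toNat_of_nonneg hj0).symm
        rw [hnorm, hjn, zpow_natCast]
        have h1 : ‖w‖ ^ n ≤ (r / 2) ^ n := pow_le_pow_left₀ (norm_nonneg _) hz2 n
        have h2' : ‖w‖ ^ n * ‖N (n : ℤ)‖ ≤ (1 / 2 : ℝ) ^ n * C := by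
          calc ‖w‖ ^ n * ‖N (n : ℤ)‖ ≤ (r / 2) ^ n * ‖N (n : ℤ)‖ :=
                mul_le_mul_of_nonneg_right h1 (norm_nonneg _)
            _ = (1 / 2 : ℝ) ^ n * (‖N (n : ℤ)‖ * r ^ n) := by
                rw [div_pow, one_div, ← div_pow]; ring
            _ ≤ (1 / 2 : ℝ) ^ n * C := by
                exact mul_le_mul_of_nonneg_left (hC n) (by positivity)
        calc ‖w‖ * (‖w‖ ^ n * ‖N (n : ℤ)‖) ≤ ‖w‖ * ((1 / 2 : ℝ) ^ n * C) :=
              mul_le_mul_of_nonneg_left h2' (norm_nonneg _)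
          _ = ‖w‖ * C * (1 / 2 : ℝ) ^ n := by ring
    _ = ∑ n ∈ ((t.erase (-1)).filter (fun j => 0 ≤ j)).image Int.toNat,
          ‖w‖ * C * (1 / 2 : ℝ) ^ n := by
        refine (Finset.sum_image (f := fun n : ℕ => ‖w‖ * C * (1 / 2 : ℝ) ^ n)
          (g := Int.toNat) ?_).symm
        intro a ha b hb hab
        have ha0 : 0 ≤ a := (Finset.mem_filter.mp ha).2
        have hb0 : 0 ≤ b := (Finset.mem_filter.mp hb).2
        omega
    _ ≤ ∑' n : ℕ, ‖w‖ * C * (1 / 2 : ℝ) ^ n := by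
        refine Summable.sum_le_tsum _ (fun i _ => by positivity) ?_
        exact (summable_geometric_of_lt_one (by norm_num) (by norm_num)).mul_left _
    _ = 2 * C * ‖w‖ := by
        rw [tsum_mul_left, tsum_geometric_of_lt_one (by norm_num) (by norm_num)]
        norm_num; ring

/-- under a simple pole at `z₀`, for any closed complement `V₀` of `ran A₀`
with projection `P` onto `V₀` along `ran A₀`, the residue satisfies `N₋₁ = S_{V₀}⁻¹ P`
(viewed as a map `B → B` via `ker A₀ ⊆ B`), i.e. for every `y`, `N₋₁ y ∈ ker A₀` and
`S_{V₀}(N₋₁ y) = P (A₁ (N₋₁ y)) = P y`. -/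
theorem stmt_11 {E : Type*} [NormedAddCommGroup E] [NormedSpace ℂ E] [CompleteSpace E]
    (U : Set ℂ) (hUopen : IsOpen U) (hUconn : IsConnected U)
    (A : ℂ → E →L[ℂ] E) (hol : AnalyticOnNhd ℂ A U)
    (hFred : ∀ z ∈ U, IsFredholmOp (A z))
    (z₀ : ℂ) (hz₀ : z₀ ∈ U)
    (hsing : ¬ IsUnit (A z₀)) (hiso : ∀ᶠ z in 𝓝[≠] z₀, IsUnit (A z))
    -- Laurent expansion of the inverse `N(z)` with a simple pole at `z₀`
    (N : ℤ → E →L[ℂ] E) (hNm : N (-1) ≠ 0) (hlow : ∀ j : ℤ, j < -1 → N j = 0)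
    (Ninv : ℂ → E →L[ℂ] E)
    (hNinv : ∀ᶠ z in 𝓝[≠] z₀, Ninv z ∘L A z = 1 ∧ A z ∘L Ninv z = 1)
    (hLaurent : ∀ᶠ z in 𝓝[≠] z₀, HasSum (fun j : ℤ => (z - z₀) ^ j • N j) (Ninv z))
    -- a closed complement `V₀` of `ran A₀` and the projection `P` onto `V₀` along `ran A₀`
    (V₀ : Submodule ℂ E) (hV₀closed : IsClosed (V₀ : Set E))
    (hV₀ : IsCompl (LinearMap.range (A z₀ : E →ₗ[ℂ] E)) V₀)
    (P : E →L[ℂ] E) (hPidem : P ∘L P = P)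
    (hPker : LinearMap.ker (P : E →ₗ[ℂ] E) = LinearMap.range (A z₀ : E →ₗ[ℂ] E)) (hPran : LinearMap.range (P : E →ₗ[ℂ] E) = V₀) :
    ∀ y : E, N (-1) y ∈ LinearMap.ker (A z₀ : E →ₗ[ℂ] E) ∧ P (deriv A z₀ (N (-1) y)) = P y := by
  -- pick a point z₁ ≠ z₀ where the Laurent series converges
  obtain ⟨z₁, hz₁sum, hz₁ne⟩ :=
    (hLaurent.and (eventually_mem_nhdsWithin (s := {z₀}ᶜ) (a := z₀))).exists
  have hz₁ : z₁ ≠ z₀ := hz₁ne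
  set r : ℝ := ‖z₁ - z₀‖ with hrdef
  have hr : 0 < r := norm_pos_iff.mpr (sub_ne_zero.mpr hz₁)
  -- bound the Laurent coefficients
  have hsum_nat : Summable (fun n : ℕ => (z₁ - z₀) ^ (n : ℤ) • N (n : ℤ)) :=
    hz₁sum.summable.comp_injective (fun a b => by omega)
  have htend0 : Filter.Tendsto (fun n : ℕ => ‖(z₁ - z₀) ^ (n : ℤ) • N (n : ℤ)‖)
      Filter.atTop (𝓝 0) := by
    simpa using hsum_nat.tendsto_atTop_zero.norm
  obtain ⟨C, hCub⟩ := htend0.bddAbove_range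
  have hC : ∀ n : ℕ, ‖N (n : ℤ)‖ * r ^ n ≤ C := by
    intro n
    have := hCub (Set.mem_range_self n)
    rwa [norm_smul ((z₁ - z₀) ^ (n : ℤ)) (N (n : ℤ)), norm_zpow, zpow_natCast, ← hrdef,
      mul_comm] at this
  -- the key limit: (z - z₀) • Ninv z → N (-1)
  have hM : Filter.Tendsto (fun z => (z - z₀) • Ninv z) (𝓝[≠] z₀) (𝓝 (N (-1))) := by
    rw [tendsto_iff_norm_sub_tendsto_zero]
    have hball : ∀ᶠ z in 𝓝[≠] z₀, ‖z - z₀‖ ≤ r / 2 := by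
      have h1 : ∀ᶠ z in 𝓝 z₀, ‖z - z₀‖ ≤ r / 2 := by
        filter_upwards [Metric.closedBall_mem_nhds z₀ (show (0:ℝ) < r / 2 by positivity)]
          with z hz
        rwa [Metric.mem_closedBall, dist_eq_norm] at hz
      exact h1.filter_mono nhdsWithin_le_nhds
    refine squeeze_zero' (g := fun z => 2 * C * ‖z - z₀‖)
      (Filter.Eventually.of_forall fun z => norm_nonneg _) ?_ ?_
    · filter_upwards [hLaurent, eventually_mem_nhdsWithin, hball] with z hzsum hzne hzball
      exact key_est z₀ N hlow r C hr hC hzne hzball hzsum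
    · have : Filter.Tendsto (fun z : ℂ => 2 * C * ‖z - z₀‖) (𝓝 z₀)
          (𝓝 (2 * C * ‖z₀ - z₀‖)) :=
        (continuous_const.mul ((continuous_id.sub continuous_const).norm)).tendsto z₀
      simpa using this.mono_left nhdsWithin_le_nhds
  -- Claim 1 : A z₀ ∘L N (-1) = 0
  have hA : Filter.Tendsto A (𝓝[≠] z₀) (𝓝 (A z₀)) :=
    ((hol z₀ hz₀).continuousAt.tendsto).mono_left nhdsWithin_le_nhds
  have h1 : A z₀ ∘L N (-1) = 0 := by
    have hL : Filter.Tendsto (fun z => A z ∘L ((z - z₀) • Ninv z)) (𝓝[≠] z₀)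
        (𝓝 (A z₀ ∘L N (-1))) := tendsto_clm_comp hA hM
    have hR : Filter.Tendsto (fun z : ℂ => (z - z₀) • (1 : E →L[ℂ] E)) (𝓝[≠] z₀)
        (𝓝 (0 : E →L[ℂ] E)) := by
      have : Filter.Tendsto (fun z : ℂ => (z - z₀) • (1 : E →L[ℂ] E)) (𝓝 z₀)
          (𝓝 ((z₀ - z₀) • (1 : E →L[ℂ] E))) :=
        ((continuous_id.sub continuous_const).smul continuous_const).tendsto z₀
      simpa using this.mono_left nhdsWithin_le_nhds
    have heq : ∀ᶠ z in 𝓝[≠] z₀,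
        A z ∘L ((z - z₀) • Ninv z) = (z - z₀) • (1 : E →L[ℂ] E) := by
      filter_upwards [hNinv] with z hz
      rw [ContinuousLinearMap.comp_smul, hz.2]
    exact tendsto_nhds_unique (hL.congr' heq) hR
  -- P ∘L A z₀ = 0
  have hPA : P ∘L A z₀ = 0 := by
    ext x
    have : A z₀ x ∈ LinearMap.ker (P : E →ₗ[ℂ] E) := hPker ▸ LinearMap.mem_range_self _ x
    simpa using this
  -- slope tends to the derivative
  have hslope : Filter.Tendsto (fun z => (z - z₀)⁻¹ • (A z - A z₀)) (𝓝[≠] z₀)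
      (𝓝 (deriv A z₀)) := by
    have hd : HasDerivAt A (deriv A z₀) z₀ :=
      ((hol z₀ hz₀).differentiableAt).hasDerivAt
    have := hasDerivAt_iff_tendsto_slope.mp hd
    rwa [funext (slope_def_module A z₀)] at this
  -- Claim 2
  have h2 : P ∘L deriv A z₀ ∘L N (-1) = P := by
    have hlim2 : Filter.Tendsto
        (fun z => P ∘L (((z - z₀)⁻¹ • (A z - A z₀)) ∘L ((z - z₀) • Ninv z))) (𝓝[≠] z₀)
        (𝓝 (P ∘L (deriv A z₀ ∘L N (-1)))) :=
      tendsto_clm_comp tendsto_const_nhds (tendsto_clm_comp hslope hM)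
    have heq2 : ∀ᶠ z in 𝓝[≠] z₀,
        P ∘L (((z - z₀)⁻¹ • (A z - A z₀)) ∘L ((z - z₀) • Ninv z)) = P := by
      filter_upwards [hNinv, eventually_mem_nhdsWithin] with z hz hzne
      have hw : z - z₀ ≠ (0 : ℂ) := sub_ne_zero.mpr hzne
      have hP0 : ∀ u : E, P (A z₀ u) = 0 := by
        intro u
        have : A z₀ u ∈ LinearMap.ker (P : E →ₗ[ℂ] E) := hPker ▸ LinearMap.mem_range_self _ u
        simpa using this
      ext x
      have h2x : A z (Ninv z x) = x := by
        have := congrArg (fun T : E →L[ℂ] E => T x) hz.2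
        simpa using this
      simp only [ContinuousLinearMap.comp_apply, ContinuousLinearMap.smul_apply,
        ContinuousLinearMap.sub_apply, map_smul, map_sub, h2x, hP0, sub_zero,
        smul_smul, inv_mul_cancel₀ hw, mul_inv_cancel₀ hw, one_smul]
    exact tendsto_nhds_unique (hlim2.congr' heq2) tendsto_const_nhds
  intro y
  constructor
  · have : (A z₀ ∘L N (-1)) y = 0 := by rw [h1]; rfl
    simpa [LinearMap.mem_ker] using this
  · have := congrArg (fun T : E →L[ℂ] E => T y) h2
    simpa using this
end
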